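/- arXiv:1103.1418 — 2 statements merged into one kernel-verified Lean document; each statement's English description precedes it below -/
import Mathlib

section
/- Let a₁, a₂, a₃ be nonzero integers and n an integer with d₃ = gcd(gcd(a₁,a₂), a₃) dividing n. With d₂ = gcd(a₁,a₂), n₁ = n/d₃, ā₁ = a₁/d₂, ā₂ = a₂/d₂, ā₃ = a₃/d₃, d̄₁ = ā₁, d̄₂ = d₂/d₃, for all integers t₁, t₂ the triple x₁ = n₁·d̄₁^(φ(|ā₂|)−1)·d̄₂^(φ(|ā₃|)−1) + ā₂t₁ + ā₃·d̄₁^(φ(|ā₂|)−1)t₂, x₂ = (n₁/ā₂)(1 − d̄₁^φ(|ā₂|))·d̄₂^(φ(|ā₃|)−1) − d̄₁t₁ + (ā₃/ā₂)(1 − d̄₁^φ(|ā₂|))t₂, x₃ = (n₁/ā₃)(1 − d̄₂^φ(|ā₃|)) − d̄₂t₂ is an integral solution of a₁x₁ + a₂x₂ + a₃x₃ = n. -/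
lemma euler_dvd_aux (x m : ℤ) (h : IsCoprime x m) :
    m ∣ 1 - x ^ (Nat.totient m.natAbs) := by
  have hm0 : ((m : ℤ) : ZMod m.natAbs) = 0 :=
    (ZMod.intCast_zmod_eq_zero_iff_dvd m m.natAbs).mpr (Int.natAbs_dvd.mpr dvd_rfl)
  obtain ⟨u, v, huv⟩ := h
  have hx : IsUnit ((x : ZMod m.natAbs)) := by
    apply IsUnit.of_mul_eq_one (u : ZMod m.natAbs)
    have h2 := congrArg (Int.cast : ℤ → ZMod m.natAbs) huv
    push_cast at h2
    linear_combination h2 - (v : ZMod m.natAbs) * hm0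
  obtain ⟨w, hw⟩ := hx
  have hpow : (x : ZMod m.natAbs) ^ Nat.totient m.natAbs = 1 := by
    rw [← hw, ← Units.val_pow_eq_pow_val, ZMod.pow_totient, Units.val_one]
  apply Int.natAbs_dvd.mp
  rw [← ZMod.intCast_zmod_eq_zero_iff_dvd]
  push_cast
  rw [hpow]; ring

theorem three_var_sol_forward (a₁ a₂ a₃ n : ℤ)
    (h₁ : a₁ ≠ 0) (h₂ : a₂ ≠ 0) (h₃ : a₃ ≠ 0)
    (d₂ d₃ n₁ ab1 ab2 ab3 db1 db2 : ℤ)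
    (hd₂ : d₂ = Int.gcd a₁ a₂) (hd₃ : d₃ = Int.gcd d₂ a₃) (hdn : d₃ ∣ n)
    (hn₁ : n₁ = n / d₃) (hab1 : ab1 = a₁ / d₂) (hab2 : ab2 = a₂ / d₂) (hab3 : ab3 = a₃ / d₃)
    (hdb1 : db1 = ab1) (hdb2 : db2 = d₂ / d₃) (t₁ t₂ : ℤ) :
    a₁ * (n₁ * db1 ^ (Nat.totient ab2.natAbs - 1) * db2 ^ (Nat.totient ab3.natAbs - 1)
          + ab2 * t₁ + ab3 * db1 ^ (Nat.totient ab2.natAbs - 1) * t₂)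
    + a₂ * (n₁ * (1 - db1 ^ Nat.totient ab2.natAbs) / ab2 * db2 ^ (Nat.totient ab3.natAbs - 1)
          - db1 * t₁ + ab3 * (1 - db1 ^ Nat.totient ab2.natAbs) / ab2 * t₂)
    + a₃ * (n₁ * (1 - db2 ^ Nat.totient ab3.natAbs) / ab3 - db2 * t₂) = n := by
  subst hdb1
  -- basic nonzero / divisibility facts
  have hd₂0 : d₂ ≠ 0 := by
    rw [hd₂]; exact_mod_cast Int.natCast_ne_zero.mpr (fun h => by
      simp [Int.gcd_eq_zero_iff] at h; exact h₁ h.1)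
  have hd₃0 : d₃ ≠ 0 := by
    rw [hd₃]; exact_mod_cast Int.natCast_ne_zero.mpr (fun h => by
      simp [Int.gcd_eq_zero_iff] at h; exact h₃ h.2)
  have hd₂a₁ : d₂ ∣ a₁ := hd₂ ▸ Int.gcd_dvd_left a₁ a₂
  have hd₂a₂ : d₂ ∣ a₂ := hd₂ ▸ Int.gcd_dvd_right a₁ a₂
  have hd₃d₂ : d₃ ∣ d₂ := hd₃ ▸ Int.gcd_dvd_left d₂ a₃
  have hd₃a₃ : d₃ ∣ a₃ := hd₃ ▸ Int.gcd_dvd_right d₂ a₃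
  have ea₁ : a₁ = d₂ * db1 := by rw [hab1, Int.mul_ediv_cancel' hd₂a₁]
  have ea₂ : a₂ = d₂ * ab2 := by rw [hab2, Int.mul_ediv_cancel' hd₂a₂]
  have ea₃ : a₃ = d₃ * ab3 := by rw [hab3, Int.mul_ediv_cancel' hd₃a₃]
  have ed₂ : d₂ = d₃ * db2 := by rw [hdb2, Int.mul_ediv_cancel' hd₃d₂]
  have en : n = d₃ * n₁ := by rw [hn₁, Int.mul_ediv_cancel' hdn]
  have hab20 : ab2 ≠ 0 := fun h => h₂ (by rw [ea₂, h, mul_zero])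
  have hab30 : ab3 ≠ 0 := fun h => h₃ (by rw [ea₃, h, mul_zero])
  -- coprimalities
  have hg₂ : Int.gcd db1 ab2 = 1 := by
    rw [hab1, hab2, hd₂]
    exact Int.gcd_div_gcd_div_gcd (Nat.pos_of_ne_zero (fun h => by
      simp [Int.gcd_eq_zero_iff] at h; exact h₁ h.1))
  have hg₃ : Int.gcd db2 ab3 = 1 := by
    rw [hdb2, hab3, hd₃]
    exact Int.gcd_div_gcd_div_gcd (Nat.pos_of_ne_zero (fun h => by
      simp [Int.gcd_eq_zero_iff] at h; exact h₃ h.2))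
  -- Euler divisibility
  have hc₂ : IsCoprime db1 ab2 := by
    rw [Int.isCoprime_iff_gcd_eq_one]; exact hg₂
  have hc₃ : IsCoprime db2 ab3 := by
    rw [Int.isCoprime_iff_gcd_eq_one]; exact hg₃
  obtain ⟨k₂, hk₂⟩ := euler_dvd_aux db1 ab2 hc₂
  obtain ⟨k₃, hk₃⟩ := euler_dvd_aux db2 ab3 hc₃
  -- totients positive
  have hφ₂ : Nat.totient ab2.natAbs - 1 + 1 = Nat.totient ab2.natAbs :=
    Nat.succ_pred_eq_of_pos (Nat.totient_pos.mpr
      (Nat.pos_of_ne_zero (Int.natAbs_ne_zero.mpr hab20)))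
  have hφ₃ : Nat.totient ab3.natAbs - 1 + 1 = Nat.totient ab3.natAbs :=
    Nat.succ_pred_eq_of_pos (Nat.totient_pos.mpr
      (Nat.pos_of_ne_zero (Int.natAbs_ne_zero.mpr hab30)))
  -- resolve the divisions
  have hdiv₂ : n₁ * (1 - db1 ^ Nat.totient ab2.natAbs) / ab2 = n₁ * k₂ := by
    rw [hk₂, mul_comm ab2 k₂, ← mul_assoc, Int.mul_ediv_cancel _ hab20]
  have hdiv₂' : ab3 * (1 - db1 ^ Nat.totient ab2.natAbs) / ab2 = ab3 * k₂ := by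
    rw [hk₂, mul_comm ab2 k₂, ← mul_assoc, Int.mul_ediv_cancel _ hab20]
  have hdiv₃ : n₁ * (1 - db2 ^ Nat.totient ab3.natAbs) / ab3 = n₁ * k₃ := by
    rw [hk₃, mul_comm ab3 k₃, ← mul_assoc, Int.mul_ediv_cancel _ hab30]
  rw [hdiv₂, hdiv₂', hdiv₃]
  rw [← hφ₂, pow_succ] at hk₂
  rw [← hφ₃, pow_succ] at hk₃
  rw [ea₁, ea₂, ea₃, ed₂, en]
  set P := db1 ^ (Nat.totient ab2.natAbs - 1)
  set Q := db2 ^ (Nat.totient ab3.natAbs - 1)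
  -- hk₂ : 1 - P * db1 = ab2 * k₂ ;  hk₃ : 1 - Q * db2 = ab3 * k₃
  linear_combination (d₃ * db2 * n₁ * Q + d₃ * db2 * ab3 * t₂) * hk₂.symm
    + d₃ * n₁ * hk₃.symm + (d₃ * db2 * db1 * n₁ * Q + d₃ * db2 * db1 * ab3 * t₂
      - d₃ * db2 * db1 * n₁ * Q - d₃ * db2 * db1 * ab3 * t₂) * hk₂
end

section
/- Let a₁, a₂, a₃ be nonzero integers and n an integer with gcd(a₁,a₂,a₃) dividing n. Then every integral solution (x₁,x₂,x₃) of a₁x₁ + a₂x₂ + a₃x₃ = n arises, for some integers t₁, t₂, from the formulas x₁ = n₁·d̄₁^(φ(|ā₂|)−1)·d̄₂^(φ(|ā₃|)−1) + ā₂t₁ + ā₃·d̄₁^(φ(|ā₂|)−1)t₂, x₂ = (n₁/ā₂)(1 − d̄₁^φ(|ā₂|))·d̄₂^(φ(|ā₃|)−1) − d̄₁t₁ + (ā₃/ā₂)(1 − d̄₁^φ(|ā₂|))t₂, x₃ = (n₁/ā₃)(1 − d̄₂^φ(|ā₃|)) − d̄₂t₂. -/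
/-- Euler's theorem in the form of a divisibility of integers. -/
lemma euler_int_dvd (a b : ℤ) (h : Int.gcd a b = 1) :
    b ∣ 1 - a ^ (Nat.totient b.natAbs) := by
  set m := b.natAbs with hm
  have hcop : IsCoprime a b := Int.isCoprime_iff_gcd_eq_one.mpr h
  have hb0 : ((b : ZMod m)) = 0 := by
    rw [ZMod.intCast_zmod_eq_zero_iff_dvd]
    exact Int.natAbs_dvd.mpr dvd_rfl
  have hunit : IsUnit ((a : ZMod m)) := by
    have h' : IsCoprime ((a : ZMod m)) ((b : ZMod m)) := hcop.map (Int.castRingHom (ZMod m))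
    rw [hb0] at h'
    exact isCoprime_zero_right.mp h'
  obtain ⟨u, hu⟩ := hunit
  have hpow : ((a : ZMod m)) ^ (Nat.totient m) = 1 := by
    rw [← hu, ← Units.val_pow_eq_pow_val, ZMod.pow_totient u, Units.val_one]
  have : ((1 - a ^ (Nat.totient m) : ℤ) : ZMod m) = 0 := by
    push_cast
    rw [hpow]; ring
  have hdvd : (m : ℤ) ∣ 1 - a ^ (Nat.totient m) :=
    (ZMod.intCast_zmod_eq_zero_iff_dvd _ _).mp this
  exact Int.natAbs_dvd.mp hdvd

theorem three_var_sol_complete (a₁ a₂ a₃ n : ℤ)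
    (h₁ : a₁ ≠ 0) (h₂ : a₂ ≠ 0) (h₃ : a₃ ≠ 0)
    (d₂ d₃ n₁ ab1 ab2 ab3 db1 db2 : ℤ)
    (hd₂ : d₂ = Int.gcd a₁ a₂) (hd₃ : d₃ = Int.gcd d₂ a₃) (hdn : d₃ ∣ n)
    (hn₁ : n₁ = n / d₃) (hab1 : ab1 = a₁ / d₂) (hab2 : ab2 = a₂ / d₂) (hab3 : ab3 = a₃ / d₃)
    (hdb1 : db1 = ab1) (hdb2 : db2 = d₂ / d₃)
    (x₁ x₂ x₃ : ℤ) (hsol : a₁ * x₁ + a₂ * x₂ + a₃ * x₃ = n) :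
    ∃ t₁ t₂ : ℤ,
      x₁ = n₁ * db1 ^ (Nat.totient ab2.natAbs - 1) * db2 ^ (Nat.totient ab3.natAbs - 1)
            + ab2 * t₁ + ab3 * db1 ^ (Nat.totient ab2.natAbs - 1) * t₂ ∧
      x₂ = n₁ * (1 - db1 ^ Nat.totient ab2.natAbs) / ab2 * db2 ^ (Nat.totient ab3.natAbs - 1)
            - db1 * t₁ + ab3 * (1 - db1 ^ Nat.totient ab2.natAbs) / ab2 * t₂ ∧
      x₃ = n₁ * (1 - db2 ^ Nat.totient ab3.natAbs) / ab3 - db2 * t₂ := by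
  -- basic positivity / nonzeroness
  have hd₂pos : (0 : ℤ) < d₂ := by
    rw [hd₂]; exact_mod_cast Int.gcd_pos_of_ne_zero_left a₂ h₁
  have hd₂ne : d₂ ≠ 0 := hd₂pos.ne'
  have hd₃pos : (0 : ℤ) < d₃ := by
    rw [hd₃]; exact_mod_cast Int.gcd_pos_of_ne_zero_right d₂ h₃
  have hd₃ne : d₃ ≠ 0 := hd₃pos.ne'
  -- divisibility facts
  have hd2a1 : d₂ ∣ a₁ := by rw [hd₂]; exact Int.gcd_dvd_left _ _
  have hd2a2 : d₂ ∣ a₂ := by rw [hd₂]; exact Int.gcd_dvd_right _ _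
  have hd3d2 : d₃ ∣ d₂ := by rw [hd₃]; exact Int.gcd_dvd_left _ _
  have hd3a3 : d₃ ∣ a₃ := by rw [hd₃]; exact Int.gcd_dvd_right _ _
  -- exact factorizations
  have ha1 : a₁ = d₂ * ab1 := by rw [hab1, Int.mul_ediv_cancel' hd2a1]
  have ha2 : a₂ = d₂ * ab2 := by rw [hab2, Int.mul_ediv_cancel' hd2a2]
  have ha3 : a₃ = d₃ * ab3 := by rw [hab3, Int.mul_ediv_cancel' hd3a3]
  have hd2eq : d₂ = d₃ * db2 := by rw [hdb2, Int.mul_ediv_cancel' hd3d2]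
  have hneq : n = d₃ * n₁ := by rw [hn₁, Int.mul_ediv_cancel' hdn]
  have hab2ne : ab2 ≠ 0 := by rintro rfl; exact h₂ (by rw [ha2, mul_zero])
  have hab3ne : ab3 ≠ 0 := by rintro rfl; exact h₃ (by rw [ha3, mul_zero])
  have hdb2ne : db2 ≠ 0 := by rintro rfl; exact hd₂ne (by rw [hd2eq, mul_zero])
  -- coprimality
  have hcop12 : Int.gcd ab1 ab2 = 1 := by
    rw [hab1, hab2, hd₂]
    exact Int.gcd_div_gcd_div_gcd (Int.gcd_pos_of_ne_zero_left a₂ h₁)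
  have hcop23 : Int.gcd db2 ab3 = 1 := by
    rw [hdb2, hab3, hd₃]
    exact Int.gcd_div_gcd_div_gcd (Int.gcd_pos_of_ne_zero_right d₂ h₃)
  set e := Nat.totient ab2.natAbs with he
  set f := Nat.totient ab3.natAbs with hf
  have he1 : 1 ≤ e := Nat.totient_pos.mpr (Int.natAbs_pos.mpr hab2ne)
  have hf1 : 1 ≤ f := Nat.totient_pos.mpr (Int.natAbs_pos.mpr hab3ne)
  have hepow : db1 ^ e = db1 ^ (e - 1) * db1 := by
    rw [← pow_succ, Nat.sub_add_cancel he1]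
  have hfpow : db2 ^ f = db2 ^ (f - 1) * db2 := by
    rw [← pow_succ, Nat.sub_add_cancel hf1]
  -- Euler divisibilities
  obtain ⟨K₂, hK₂⟩ : ab2 ∣ 1 - db1 ^ e := by rw [hdb1]; exact euler_int_dvd ab1 ab2 hcop12
  obtain ⟨K₃, hK₃⟩ : ab3 ∣ 1 - db2 ^ f := euler_int_dvd db2 ab3 hcop23
  -- reduced solution equation
  have hred : db2 * (db1 * x₁ + ab2 * x₂) + ab3 * x₃ = n₁ := by
    apply mul_left_cancel₀ hd₃ne
    rw [hdb1]
    linear_combination hsol - x₁ * ha1 - x₂ * ha2 - x₃ * ha3 + hneq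
      - (ab1 * x₁ + ab2 * x₂) * hd2eq
  -- construct t₂
  have hdvd2 : db2 ∣ n₁ * K₃ - x₃ := by
    have hcd : IsCoprime db2 ab3 := Int.isCoprime_iff_gcd_eq_one.mpr hcop23
    apply hcd.dvd_of_dvd_mul_left
    refine ⟨-(n₁ * db2 ^ (f - 1)) + (db1 * x₁ + ab2 * x₂), ?_⟩
    linear_combination -hred - n₁ * hK₃ - n₁ * hfpow
  obtain ⟨t₂, ht₂⟩ := hdvd2
  -- key identity after cancelling db2
  have hkey : db1 * x₁ + ab2 * x₂ = n₁ * db2 ^ (f - 1) + ab3 * t₂ := by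
    apply mul_left_cancel₀ hdb2ne
    linear_combination hred + ab3 * ht₂ + n₁ * hK₃ + n₁ * hfpow
  -- construct t₁
  have hdvd1 : ab2 ∣ x₁ - n₁ * db1 ^ (e - 1) * db2 ^ (f - 1) - ab3 * db1 ^ (e - 1) * t₂ := by
    have hcd : IsCoprime db1 ab2 := by
      rw [hdb1]; exact Int.isCoprime_iff_gcd_eq_one.mpr hcop12
    apply hcd.symm.dvd_of_dvd_mul_left
    refine ⟨K₂ * (n₁ * db2 ^ (f - 1) + ab3 * t₂) - x₂, ?_⟩
    linear_combination hkey + (n₁ * db2 ^ (f - 1) + ab3 * t₂) * hK₂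
      + (n₁ * db2 ^ (f - 1) + ab3 * t₂) * hepow
  obtain ⟨t₁, ht₁⟩ := hdvd1
  -- derive the x₂ relation
  have hx2 : x₂ = n₁ * K₂ * db2 ^ (f - 1) - db1 * t₁ + ab3 * K₂ * t₂ := by
    apply mul_left_cancel₀ hab2ne
    linear_combination -db1 * ht₁ + hkey + (n₁ * db2 ^ (f - 1) + ab3 * t₂) * hK₂
      + (n₁ * db2 ^ (f - 1) + ab3 * t₂) * hepow
  -- rewrite the integer divisions in the goal
  have hdivK2 : ∀ c : ℤ, c * (1 - db1 ^ e) / ab2 = c * K₂ := by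
    intro c
    rw [hK₂, mul_comm ab2 K₂, ← mul_assoc, Int.mul_ediv_cancel _ hab2ne]
  have hdivK3 : n₁ * (1 - db2 ^ f) / ab3 = n₁ * K₃ := by
    rw [hK₃, mul_comm ab3 K₃, ← mul_assoc, Int.mul_ediv_cancel _ hab3ne]
  refine ⟨t₁, t₂, ?_, ?_, ?_⟩
  · linear_combination ht₁
  · rw [hdivK2 n₁, hdivK2 ab3]; linear_combination hx2
  · rw [hdivK3]; linear_combination -ht₂
end
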